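/- Let α_k, β_k be real numbers for i ≤ k ≤ n with |α_k| ≤ u_p and |β_k| ≤ u_{p+r}, and define B_i = Σ_{K ⊊ I_i} (∏_{j∈K}(1+α_j))(∏_{j∈I_i\K} β_j), where I_i = {i, ..., n}. Then |B_i| ≤ γ_{n-i+1}(u_p + u_{p+r}) - γ_{n-i+1}(u_p), where γ_m(x) = (1+x)^m - 1. -/
import Mathlib


/-- Bound (3.9) on the bias term: if `|α_k| ≤ u_p` and `|β_k| ≤ u_{p+r}` for
`i ≤ k ≤ n`, then the sum `B_i` over proper subsets `K ⊊ I_i = {i,…,n}` of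
`(∏_{j∈K}(1+α_j))(∏_{j∈I_i\K} β_j)` satisfies
`|B_i| ≤ γ_{n-i+1}(u_p + u_{p+r}) - γ_{n-i+1}(u_p)`, with `γ_m(x) = (1+x)^m - 1`. -/
theorem bias_term_bound (i n : ℕ) (hin : i ≤ n) (up upr : ℝ)
    (hup : 0 < up) (hupr : 0 < upr)
    (α β : ℕ → ℝ)
    (hα : ∀ k ∈ Finset.Icc i n, |α k| ≤ up)
    (hβ : ∀ k ∈ Finset.Icc i n, |β k| ≤ upr) :
    |∑ K ∈ (Finset.Icc i n).powerset.filter (fun K => K ≠ Finset.Icc i n),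
        (∏ j ∈ K, (1 + α j)) * ∏ j ∈ Finset.Icc i n \ K, β j|
      ≤ ((1 + (up + upr)) ^ (n - i + 1) - 1) - ((1 + up) ^ (n - i + 1) - 1) := by
  set S := Finset.Icc i n with hS
  have hm : S.card = n - i + 1 := by rw [hS, Nat.card_Icc]; omega
  -- pointwise bound
  have hbound : ∀ K ∈ S.powerset.filter (fun K => K ≠ S),
      |(∏ j ∈ K, (1 + α j)) * ∏ j ∈ S \ K, β j|
        ≤ (∏ _j ∈ K, (1 + up)) * ∏ _j ∈ S \ K, upr := by
    intro K hK
    simp only [Finset.mem_filter, Finset.mem_powerset] at hK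
    rw [abs_mul]
    have h1 : |∏ j ∈ K, (1 + α j)| ≤ ∏ _j ∈ K, (1 + up) := by
      refine (Finset.abs_prod _ _).le.trans (Finset.prod_le_prod (fun j _ => abs_nonneg _) ?_)
      intro j hj
      have := hα j (hK.1 hj)
      have := abs_le.mp this
      calc |1 + α j| ≤ |1| + |α j| := abs_add_le _ _
        _ ≤ 1 + up := by simp [hα j (hK.1 hj)]
    have h2 : |∏ j ∈ S \ K, β j| ≤ ∏ _j ∈ S \ K, upr := by
      refine (Finset.abs_prod _ _).le.trans (Finset.prod_le_prod (fun j _ => abs_nonneg _) ?_)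
      intro j hj
      exact hβ j (Finset.mem_sdiff.mp hj).1
    exact mul_le_mul h1 h2 (abs_nonneg _)
      (Finset.prod_nonneg fun j _ => by positivity)
  calc |∑ K ∈ S.powerset.filter (fun K => K ≠ S),
        (∏ j ∈ K, (1 + α j)) * ∏ j ∈ S \ K, β j|
      ≤ ∑ K ∈ S.powerset.filter (fun K => K ≠ S),
        |(∏ j ∈ K, (1 + α j)) * ∏ j ∈ S \ K, β j| := Finset.abs_sum_le_sum_abs _ _
    _ ≤ ∑ K ∈ S.powerset.filter (fun K => K ≠ S),
        (∏ _j ∈ K, (1 + up)) * ∏ _j ∈ S \ K, upr := Finset.sum_le_sum hbound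
    _ = (∑ K ∈ S.powerset, (∏ _j ∈ K, (1 + up)) * ∏ _j ∈ S \ K, upr)
        - ((∏ _j ∈ S, (1 + up)) * ∏ _j ∈ S \ S, upr) := by
        rw [Finset.filter_ne', Finset.sum_erase_eq_sub (by simp)]
    _ = (1 + (up + upr)) ^ (n - i + 1) - (1 + up) ^ (n - i + 1) := by
        rw [← Finset.prod_add, Finset.sdiff_self]
        simp [Finset.prod_const, hm, add_assoc]
    _ = ((1 + (up + upr)) ^ (n - i + 1) - 1) - ((1 + up) ^ (n - i + 1) - 1) := by ring
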